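/- Let f : A ⟶ B and g : B ⟶ C be morphisms of cochain complexes such that f ≫ g is null-homotopic. Let θ : A⟦1⟧ ⟶ mappingCone g be any morphism in the homotopy category K(𝒜) such that the composite in K(𝒜) of θ with the class of the canonical projection mappingCone g ⟶ B⟦1⟧ equals the class of f⟦1⟧. Then there exists a homotopy x : Homotopy (f ≫ g) 0 such that θ equals the class in K(𝒜) of the chain map j(f,x) : A⟦1⟧ ⟶ mappingCone g whose components in degree n are given by f^{n+1} into the summand B^{n+1} and by the homotopy x into the summand C^n. -/

import Mathlib

open CategoryTheory Category Limits CochainComplex CochainComplex.HomComplex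

variable {𝒜 : Type*} [Category 𝒜] [Preadditive 𝒜] [HasBinaryBiproducts 𝒜]
variable {A B C : CochainComplex 𝒜 ℤ}

/-- Given chain maps `f : A ⟶ B`, `g : B ⟶ C` and a homotopy `x` from `f ≫ g` to `0`,
this is the chain map `m(g,x) : mappingCone f ⟶ C` which in degree `n` is given by the
homotopy `x` on the summand `A^{n+1}` and by `g^n` on the summand `B^n`
(Mathlib's `mappingCone.desc`-type construction). -/
noncomputable def mappingConeDescOfHomotopy (f : A ⟶ B) (g : B ⟶ C)
    (x : Homotopy (f ≫ g) 0) : mappingCone f ⟶ C :=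
  mappingCone.desc f (Cochain.ofHomotopy x) g (by rw [δ_ofHomotopy]; simp)

/-- The degree `1` cochain `A⟦1⟧ ⇝ B` whose component in degree `n` is `f^{n+1}`. -/
noncomputable def shiftCochainOfHom (f : A ⟶ B) : Cochain (A⟦(1 : ℤ)⟧) B 1 :=
  Cochain.mk (fun p q hpq =>
    (A.shiftFunctorObjXIso 1 p (p + 1) rfl).hom ≫ f.f (p + 1) ≫ (B.XIsoOfEq hpq).hom)

/-- The degree `1` cochain `A⟦1⟧ ⇝ B` with components `f^{n+1}` is a cocycle. -/
noncomputable def shiftCocycleOfHom (f : A ⟶ B) : Cocycle (A⟦(1 : ℤ)⟧) B 1 :=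
  Cocycle.mk (shiftCochainOfHom f) 2 rfl (by
    ext p q hpq
    obtain rfl : q = p + 1 + 1 := by omega
    rw [δ_v 1 2 rfl _ p (p + 1 + 1) hpq (p + 1) (p + 1) (by omega) rfl]
    simp only [shiftCochainOfHom, Cochain.mk_v]
    simp [HomologicalComplex.XIsoOfEq, eqToHom_map,
      Int.negOnePow_even 2 ⟨1, by omega⟩]
    change A.d (p + 1) (p + 1 + 1) ≫ f.f (p + 1 + 1) +
      (1 : ℤ) • -A.d (p + 1) (p + 1 + 1) ≫ f.f (p + 1 + 1) = (0 : A.X (p + 1) ⟶ B.X (p + 1 + 1))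
    simp only [one_smul, Preadditive.neg_comp, add_neg_cancel])

/-- The degree `0` cochain `A⟦1⟧ ⇝ C` whose component in degree `n` is the component
`A^{n+1} ⟶ C^n` of the homotopy `x`. -/
noncomputable def shiftCochainOfHomotopy (f : A ⟶ B) (g : B ⟶ C)
    (x : Homotopy (f ≫ g) 0) : Cochain (A⟦(1 : ℤ)⟧) C 0 :=
  Cochain.mk (fun p q _ =>
    (A.shiftFunctorObjXIso 1 p (p + 1) rfl).hom ≫ x.hom (p + 1) q)

/-- Given chain maps `f : A ⟶ B`, `g : B ⟶ C` and a homotopy `x` from `f ≫ g` to `0`,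
this is the chain map `j(f,x) : A⟦1⟧ ⟶ mappingCone g` which in degree `n` is given by
`f^{n+1}` into the summand `B^{n+1}` and by the homotopy `x` into the summand `C^n`,
with Mathlib's sign conventions for mapping cones
(Mathlib's `mappingCone.lift`-type construction). -/
noncomputable def mappingConeLiftOfHomotopy (f : A ⟶ B) (g : B ⟶ C)
    (x : Homotopy (f ≫ g) 0) : (A⟦(1 : ℤ)⟧) ⟶ mappingCone g :=
  mappingCone.lift g (-(shiftCocycleOfHom f)) (shiftCochainOfHomotopy f g x) (by
    rw [Cocycle.coe_neg]
    ext p q hpq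
    obtain rfl : q = p + 1 := by omega
    have comm := x.comm (p + 1)
    rw [dNext_eq x.hom (show (ComplexShape.up ℤ).Rel (p + 1) (p + 1 + 1) by simp),
      prevD_eq x.hom (show (ComplexShape.up ℤ).Rel p (p + 1) by simp)] at comm
    simp only [HomologicalComplex.comp_f, HomologicalComplex.zero_f_apply, add_zero] at comm
    rw [Cochain.add_v, δ_v 0 1 rfl _ p (p + 1) hpq p (p + 1) (by omega) rfl]
    simp only [shiftCocycleOfHom, Cocycle.mk_coe, shiftCochainOfHom, shiftCochainOfHomotopy, Cochain.mk_v, Cochain.neg_v,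
      Cochain.comp_v _ _ (add_zero 1) p (p + 1) (p + 1) rfl (by omega),
      Cochain.ofHom_v, Cochain.zero_v, HomologicalComplex.XIsoOfEq, eqToIso_refl,
      Iso.refl_hom, comp_id, shiftFunctorObjXIso, Int.negOnePow_one, Units.neg_smul,
      one_smul, assoc]
    simp only [shiftFunctor_obj_d', Int.negOnePow_one, Units.neg_smul, one_smul,
      Preadditive.neg_comp, Preadditive.comp_neg, neg_neg, id_comp, Category.assoc]
    change (𝟙 (A.X (p + 1)) ≫ x.hom (p + 1) p) ≫ C.d p (p + 1) +
      -(-A.d (p + 1) (p + 1 + 1)) ≫ 𝟙 (A.X (p + 1 + 1)) ≫ x.hom (p + 1 + 1) (p + 1) +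
      -(𝟙 (A.X (p + 1)) ≫ f.f (p + 1)) ≫ g.f (p + 1) = (0 : A.X (p + 1) ⟶ C.X (p + 1))
    simp only [id_comp, Preadditive.neg_comp, neg_neg]
    rw [comm]
    abel)


section Aux

variable (f : A ⟶ B) (g : B ⟶ C)

lemma aux_mor₃_eq : (mappingCone.triangle g).mor₃ =
    Cocycle.homOf ((-(mappingCone.fst g)).rightShift 1 0 (zero_add 1)) := rfl

lemma aux_rightUnshift_ofHom_comp_mor₃ (φ : (A⟦(1:ℤ)⟧) ⟶ mappingCone g) :
    (Cochain.ofHom (φ ≫ (mappingCone.triangle g).mor₃)).rightUnshift 1 (by omega) =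
      -(Cochain.ofHom φ).comp (mappingCone.fst g).1 (zero_add 1) := by
  erw [Cochain.ofHom_comp, aux_mor₃_eq, Cocycle.cochain_ofHom_homOf_eq_coe,
    Cochain.rightUnshift_comp _ _ _ 1 (by omega) 1 (by omega),
    Cocycle.rightShift_coe, Cochain.rightUnshift_rightShift, Cocycle.coe_neg,
    Cochain.comp_neg]
  rfl

lemma aux_rightUnshift_ofHom_shift :
    (Cochain.ofHom (f⟦(1:ℤ)⟧')).rightUnshift 1 (by omega) = shiftCochainOfHom f := by
  ext p q hpq
  obtain rfl : q = p + 1 := by omega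
  rw [Cochain.rightUnshift_v _ 1 (by omega) p (p+1) hpq p (add_zero p)]
  rw [shiftCochainOfHom, Cochain.mk_v]
  simp [shiftCochainOfHom, Cochain.mk_v, HomologicalComplex.XIsoOfEq, eqToHom_map]

lemma aux_delta_mu (φ : (A⟦(1:ℤ)⟧) ⟶ mappingCone g)
    (z : Cochain (A⟦(1:ℤ)⟧) (B⟦(1:ℤ)⟧) (-1))
    (hz : Cochain.ofHom (φ ≫ (mappingCone.triangle g).mor₃) =
      δ (-1) 0 z + Cochain.ofHom (f⟦(1:ℤ)⟧')) :
    δ 0 1 (z.rightUnshift 0 (by omega)) =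
      shiftCochainOfHom f + (Cochain.ofHom φ).comp (mappingCone.fst g).1 (zero_add 1) := by
  have h2 := congrArg
    (fun (w : Cochain (A⟦(1:ℤ)⟧) (B⟦(1:ℤ)⟧) 0) => w.rightUnshift 1 (by omega)) hz
  simp only [Cochain.rightUnshift_add, aux_rightUnshift_ofHom_comp_mor₃,
    aux_rightUnshift_ofHom_shift] at h2
  have h3 : (δ (-1) 0 z).rightUnshift 1 (by omega) =
      -(Cochain.ofHom φ).comp (mappingCone.fst g).1 (zero_add 1) - shiftCochainOfHom f := by
    rw [eq_sub_iff_add_eq, ← h2]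
    exact aux_rightUnshift_ofHom_comp_mor₃ g φ
  rw [Cochain.δ_rightUnshift z 0 (by omega) 1 0 (by omega), h3,
    Int.negOnePow_one, Units.neg_smul, one_smul]
  abel

lemma aux_delta_beta (φ : (A⟦(1:ℤ)⟧) ⟶ mappingCone g)
    (μ : Cochain (A⟦(1:ℤ)⟧) B 0)
    (hμ : δ 0 1 μ = shiftCochainOfHom f +
      (Cochain.ofHom φ).comp (mappingCone.fst g).1 (zero_add 1)) :
    δ 0 1 ((Cochain.ofHom φ).comp (mappingCone.snd g) (zero_add 0) +
        μ.comp (Cochain.ofHom g) (zero_add 0)) =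
      (shiftCochainOfHom f).comp (Cochain.ofHom g) (add_zero 1) := by
  rw [δ_add, δ_ofHom_comp, mappingCone.δ_snd, δ_comp_ofHom, hμ, Cochain.comp_neg,
    Cochain.add_comp, ← Cochain.comp_assoc_of_first_is_zero_cochain]
  abel

/-- The homotopy `f ≫ g ∼ 0` associated to a degree `0` cochain `β' : A⟦1⟧ ⇝ C`
satisfying `δ β' = shiftCochainOfHom f ≫ g`. -/
noncomputable def auxHomotopy (β' : Cochain (A⟦(1:ℤ)⟧) C 0)
    (hβ : δ 0 1 β' = (shiftCochainOfHom f).comp (Cochain.ofHom g) (add_zero 1)) :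
    Homotopy (f ≫ g) 0 where
  hom n m := if h : m + 1 = n then
      (A.shiftFunctorObjXIso 1 m n (by omega)).inv ≫ β'.v m m (add_zero m) else 0
  zero n m h := dif_neg h
  comm n := by
    obtain ⟨p, rfl⟩ : ∃ p, n = p + 1 := ⟨n-1, by omega⟩
    have key : (δ 0 1 β').v p (p+1) rfl =
        ((shiftCochainOfHom f).comp (Cochain.ofHom g) (add_zero 1)).v p (p+1) rfl := by
      rw [hβ]
    rw [δ_zero_cochain_v β' p (p+1) rfl,
      Cochain.comp_v _ _ (add_zero 1) p (p+1) (p+1) rfl (by omega),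
      sub_eq_iff_eq_add] at key
    rw [dNext_eq _ (show (ComplexShape.up ℤ).Rel (p+1) (p+1+1) from rfl),
      prevD_eq _ (show (ComplexShape.up ℤ).Rel p (p+1) from rfl)]
    rw [dif_pos rfl, dif_pos rfl]
    simp only [assoc]
    rw [key]
    rw [shiftCochainOfHom, Cochain.mk_v]
    simp [shiftCochainOfHom, shiftFunctor_obj_d', HomologicalComplex.XIsoOfEq,
      eqToHom_map]
    erw [id_comp, id_comp, Preadditive.neg_comp]
    abel

lemma shiftCochainOfHomotopy_auxHomotopy (β' : Cochain (A⟦(1:ℤ)⟧) C 0)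
    (hβ : δ 0 1 β' = (shiftCochainOfHom f).comp (Cochain.ofHom g) (add_zero 1)) :
    shiftCochainOfHomotopy f g (auxHomotopy f g β' hβ) = β' := by
  ext p
  rw [shiftCochainOfHomotopy, Cochain.mk_v]
  simp [shiftCochainOfHomotopy, auxHomotopy, Cochain.mk_v, shiftFunctorObjXIso]
  erw [id_comp]

end Aux

/-- Let `f : A ⟶ B`, `g : B ⟶ C` be chain maps with `f ≫ g`
null-homotopic, and let `θ : A⟦1⟧ ⟶ mappingCone g` be a morphism in the homotopy
category `K(𝒜)` whose composite with the class of the canonical projection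
`mappingCone g ⟶ B⟦1⟧` is the class of `f⟦1⟧`. Then `θ` is the class of `j(f,x)` for
some homotopy `x` from `f ≫ g` to `0`. -/
theorem homotopyCategory_lift_factorisation
    (f : A ⟶ B) (g : B ⟶ C) (hfg : Nonempty (Homotopy (f ≫ g) 0))
    (θ : (HomotopyCategory.quotient 𝒜 (ComplexShape.up ℤ)).obj (A⟦(1 : ℤ)⟧) ⟶
      (HomotopyCategory.quotient 𝒜 (ComplexShape.up ℤ)).obj (mappingCone g))
    (hθ : θ ≫ (HomotopyCategory.quotient 𝒜 (ComplexShape.up ℤ)).map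
        (mappingCone.triangle g).mor₃ =
      (HomotopyCategory.quotient 𝒜 (ComplexShape.up ℤ)).map (f⟦(1 : ℤ)⟧')) :
    ∃ x : Homotopy (f ≫ g) 0,
      θ = (HomotopyCategory.quotient 𝒜 (ComplexShape.up ℤ)).map
        (mappingConeLiftOfHomotopy f g x) := by
  obtain ⟨φ, rfl⟩ := (HomotopyCategory.quotient 𝒜 (ComplexShape.up ℤ)).map_surjective θ
  erw [← Functor.map_comp] at hθ
  obtain ⟨z, hz⟩ := Cochain.equivHomotopy _ _ (HomotopyCategory.homotopyOfEq _ _ hθ)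
  change Cochain (A⟦(1:ℤ)⟧) (B⟦(1:ℤ)⟧) (-1) at z
  have hμ := aux_delta_mu f g φ z hz
  have hβ := aux_delta_beta f g φ (z.rightUnshift 0 (by omega)) hμ
  refine ⟨auxHomotopy f g _ hβ, ?_⟩
  apply HomotopyCategory.eq_of_homotopy
  refine mappingCone.liftHomotopy g _ _ (-(z.rightUnshift 0 (by omega))) 0 ?_ ?_
  · rw [mappingConeLiftOfHomotopy, mappingCone.lift_fst, δ_neg, neg_neg, hμ,
      Cocycle.coe_neg, shiftCocycleOfHom, Cocycle.mk_coe]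
    abel
  · rw [mappingConeLiftOfHomotopy, mappingCone.lift_snd,
      shiftCochainOfHomotopy_auxHomotopy, δ_zero, Cochain.neg_comp]
    abel
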